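/- Non-confinement of Brownian motion in a Hölder ball starting at the boundary: let W be a one-dimensional standard Brownian motion, α ∈ (0,1), μ > 0, and let γ_t be a continuous path on [0,t] such that γ_t(t) − γ_t(t_1) = μ|t − t_1|^α for some t_1 ∈ [0,t). Define W^{γ_t}(s) := γ_t(s) for s ∈ [0,t) and W^{γ_t}(s) := W(s) − W(t) + γ_t(t) for s ∈ [t,T]. Then P{ ∃ δ > 0 such that ⟦W^{γ_t}_{t+δ}⟧_α ≤ μ } = 0; in particular, with probability one the concatenated path exits the set C^α_μ immediately after time t. -/

import Mathlib

open Set MeasureTheory ProbabilityTheory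

/-- A standard one-dimensional Brownian motion: starts at `0`, has continuous sample paths,
Gaussian increments `W(t) − W(s) ~ N(0, t−s)`, and independent increments. -/
def IsStandardBrownianMotion {Ω : Type*} [MeasurableSpace Ω] (P : Measure Ω)
    (W : ℝ → Ω → ℝ) : Prop :=
  (∀ t : ℝ, Measurable (W t)) ∧
  (∀ ω, W 0 ω = 0) ∧
  (∀ ω, Continuous fun t => W t ω) ∧
  (∀ s t : ℝ, 0 ≤ s → s ≤ t →
    Measure.map (fun ω => W t ω - W s ω) P = gaussianReal 0 (Real.toNNReal (t - s))) ∧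
  (∀ (k : ℕ) (ts : Fin (k + 1) → ℝ), Monotone ts → (∀ i, 0 ≤ ts i) →
    iIndepFun
      (fun i : Fin k => fun ω => W (ts i.succ) ω - W (ts i.castSucc) ω) P)


open scoped ENNReal NNReal


lemma concave_rpow_bound {α : ℝ} (hα : 0 ≤ α) (hα1 : α ≤ 1) {d h : ℝ} (hd : 0 < d) (hh : 0 ≤ h) :
    (d + h) ^ α ≤ d ^ α + α * d ^ (α - 1) * h := by
  have h1 : d + h = d * (1 + h / d) := by field_simp
  have hdiv : (0:ℝ) ≤ h / d := div_nonneg hh hd.le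
  have h2 : (0:ℝ) ≤ 1 + h / d := by linarith
  rw [h1, Real.mul_rpow hd.le h2]
  have h3 : (1 + h / d) ^ α ≤ 1 + α * (h / d) :=
    rpow_one_add_le_one_add_mul_self (by linarith) hα hα1
  have h4 : d ^ α * (1 + h / d) ^ α ≤ d ^ α * (1 + α * (h / d)) :=
    mul_le_mul_of_nonneg_left h3 (Real.rpow_nonneg hd.le _)
  refine h4.trans_eq ?_
  have h5 : d ^ (α - 1) = d ^ α / d := by
    rw [Real.rpow_sub hd, Real.rpow_one]
  rw [h5]
  field_simp

noncomputable def stdGaussIic3 : ℝ≥0∞ := gaussianReal 0 1 (Iic 3)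

lemma stdGaussIic3_lt_one : stdGaussIic3 < 1 := by
  have htot : gaussianReal 0 1 (Iic 3) + gaussianReal 0 1 (Ioi 3) = 1 := by
    rw [← measure_union (by simp [Set.disjoint_left]) measurableSet_Ioi]
    rw [Set.Iic_union_Ioi]
    simp
  have hpos : 0 < gaussianReal 0 1 (Ioi 3) := by
    rw [gaussianReal_apply 0 one_ne_zero]
    rw [show (gaussianPDF 0 1) = fun x => gaussianPDF 0 1 x from rfl]
    rw [lintegral_pos_iff_support (measurable_gaussianPDF 0 1)]
    have hsupp : Function.support (fun x => gaussianPDF 0 1 x) = Set.univ := by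
      ext x
      simp only [Function.mem_support, Set.mem_univ, iff_true]
      have h := gaussianPDFReal_pos 0 1 x one_ne_zero
      simp only [gaussianPDF]
      exact (ENNReal.ofReal_pos.mpr h).ne'
    rw [hsupp, Measure.restrict_apply_univ]
    simp [Real.volume_Ioi]
  calc stdGaussIic3 < stdGaussIic3 + gaussianReal 0 1 (Ioi 3) := by
        refine ENNReal.lt_add_right ?_ hpos.ne'
        exact (measure_lt_top _ _).ne
    _ = 1 := htot

lemma gauss_Iic_le {v r : ℝ} (hv : 0 < v) (hr : r ≤ 3 * Real.sqrt v) :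
    gaussianReal 0 v.toNNReal (Iic r) ≤ stdGaussIic3 := by
  set c : ℝ := (Real.sqrt v)⁻¹ with hc
  have hsv : 0 < Real.sqrt v := Real.sqrt_pos.mpr hv
  have hcpos : 0 < c := inv_pos.mpr hsv
  have hmap : (gaussianReal 0 v.toNNReal).map (c * ·) = gaussianReal 0 1 := by
    rw [gaussianReal_map_const_mul c, mul_zero]
    congr 1
    ext
    push_cast
    rw [Real.coe_toNNReal _ hv.le, hc, ← Real.sqrt_mul_self hv.le]
    have h2 := (Real.sqrt_pos.mpr hv).ne'
    field_simp
    rw [Real.sq_sqrt (Real.sqrt_nonneg _)]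
  have hpre : (c * ·) ⁻¹' (Iic (c * r)) = Iic r := by
    ext x
    simp only [Set.mem_preimage, Set.mem_Iic]
    exact mul_le_mul_iff_right₀ hcpos
  have : gaussianReal 0 v.toNNReal (Iic r) = gaussianReal 0 1 (Iic (c * r)) := by
    rw [← hmap, Measure.map_apply (measurable_const_mul c) measurableSet_Iic, hpre]
  rw [this]
  refine measure_mono (Iic_subset_Iic.mpr ?_)
  calc c * r ≤ c * (3 * Real.sqrt v) := by
        exact mul_le_mul_of_nonneg_left hr hcpos.le
    _ = 3 := by
        rw [hc]
        field_simp


noncomputable def holderSeq (c μ α : ℝ) : ℕ → ℝ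
  | 0 => min 1 (c⁻¹ ^ 2)
  | (k+1) => min (holderSeq c μ α k / 2) ((Real.sqrt (holderSeq c μ α k) / μ) ^ (α⁻¹ : ℝ))

lemma exists_holder_seq {c μ α : ℝ} (hc : 0 < c) (hμ : 0 < μ) (hα : 0 < α) :
    ∃ H : ℕ → ℝ, (∀ k, 0 < H k) ∧ (∀ k, H (k + 1) ≤ H k / 2) ∧
      (∀ k l, k ≤ l → H l ≤ H k) ∧
      (∀ k, c * H k ≤ Real.sqrt (H k)) ∧
      (∀ k, μ * H (k + 1) ^ α ≤ Real.sqrt (H k)) ∧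
      (∀ k, H k ≤ (1 / 2 : ℝ) ^ k) := by
  set H := holderSeq c μ α with hH
  have hpos : ∀ k, 0 < H k := by
    intro k
    induction k with
    | zero => exact lt_min one_pos (pow_pos (inv_pos.mpr hc) 2)
    | succ k ih =>
      refine lt_min (by linarith) ?_
      exact Real.rpow_pos_of_pos (div_pos (Real.sqrt_pos.mpr ih) hμ) _
  have hhalf : ∀ k, H (k + 1) ≤ H k / 2 := fun k => min_le_left _ _
  have hanti : Antitone H := by
    refine antitone_nat_of_succ_le fun k => ?_
    have := hhalf k
    have := hpos k
    linarith
  have hbound : ∀ k, H k ≤ c⁻¹ ^ 2 := by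
    intro k
    refine le_trans (hanti (Nat.zero_le k)) (min_le_right _ _)
  refine ⟨H, hpos, hhalf, fun k l hkl => hanti hkl, ?_, ?_, ?_⟩
  · intro k
    have h1 : Real.sqrt (H k) ≤ c⁻¹ := by
      calc Real.sqrt (H k) ≤ Real.sqrt (c⁻¹ ^ 2) := Real.sqrt_le_sqrt (hbound k)
        _ = c⁻¹ := by rw [Real.sqrt_sq (inv_nonneg.mpr hc.le)]
    have h2 : Real.sqrt (H k) * Real.sqrt (H k) = H k := Real.mul_self_sqrt (hpos k).le
    have h3 : Real.sqrt (H k) ≥ 0 := Real.sqrt_nonneg _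
    calc c * H k = c * (Real.sqrt (H k) * Real.sqrt (H k)) := by rw [h2]
      _ ≤ c * (c⁻¹ * Real.sqrt (H k)) := by
          exact mul_le_mul_of_nonneg_left (mul_le_mul_of_nonneg_right h1 h3) hc.le
      _ = Real.sqrt (H k) := by field_simp
  · intro k
    have hA : (0:ℝ) < Real.sqrt (H k) / μ := div_pos (Real.sqrt_pos.mpr (hpos k)) hμ
    have h1 : H (k + 1) ≤ (Real.sqrt (H k) / μ) ^ (α⁻¹ : ℝ) := min_le_right _ _
    have h2 : H (k + 1) ^ α ≤ ((Real.sqrt (H k) / μ) ^ (α⁻¹ : ℝ)) ^ α :=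
      Real.rpow_le_rpow (hpos (k + 1)).le h1 hα.le
    have h3 : ((Real.sqrt (H k) / μ) ^ (α⁻¹ : ℝ)) ^ α = Real.sqrt (H k) / μ := by
      rw [← Real.rpow_mul hA.le, inv_mul_cancel₀ hα.ne', Real.rpow_one]
    calc μ * H (k + 1) ^ α ≤ μ * (Real.sqrt (H k) / μ) := by
          exact mul_le_mul_of_nonneg_left (h2.trans_eq h3) hμ.le
      _ = Real.sqrt (H k) := by field_simp
  · intro k
    induction k with
    | zero =>
      have h0 : H 0 = min 1 (c⁻¹ ^ 2) := rfl
      rw [h0, pow_zero]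
      exact min_le_left _ _
    | succ k ih =>
      calc H (k + 1) ≤ H k / 2 := hhalf k
        _ ≤ (1/2 : ℝ) ^ k / 2 := by linarith
        _ = (1/2 : ℝ) ^ (k + 1) := by ring

lemma prob_tail_incr_zero {Ω : Type*} [MeasurableSpace Ω] (P : Measure Ω)
    [IsProbabilityMeasure P] (W : ℝ → Ω → ℝ)
    (hW1 : ∀ s : ℝ, Measurable (W s))
    (hW4 : ∀ s u : ℝ, 0 ≤ s → s ≤ u →
      Measure.map (fun ω => W u ω - W s ω) P = gaussianReal 0 (Real.toNNReal (u - s)))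
    (hW5 : ∀ (k : ℕ) (ts : Fin (k + 1) → ℝ), Monotone ts → (∀ i, 0 ≤ ts i) →
      iIndepFun
        (fun i : Fin k => fun ω => W (ts i.succ) ω - W (ts i.castSucc) ω) P)
    (t : ℝ) (ht : 0 ≤ t) (H : ℕ → ℝ)
    (Hpos : ∀ k, 0 < H k) (Hhalf : ∀ k, H (k + 1) ≤ H k / 2)
    (Hanti : ∀ k l, k ≤ l → H l ≤ H k) (K : ℕ) :
    P {ω | ∀ k, K ≤ k → W (t + H k) ω - W (t + H (k + 1)) ω ≤ 2 * Real.sqrt (H k)} = 0 := by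
  have key : ∀ n : ℕ,
      P {ω | ∀ k, K ≤ k → W (t + H k) ω - W (t + H (k + 1)) ω ≤ 2 * Real.sqrt (H k)}
        ≤ stdGaussIic3 ^ n := by
    intro n
    set ts : Fin (n + 1) → ℝ := fun i => t + H (K + (n - (i : ℕ))) with hts
    have htsmono : Monotone ts := by
      intro a b hab
      exact add_le_add_right (Hanti _ _ (Nat.add_le_add_left (Nat.sub_le_sub_left
        (Fin.le_def.mp hab) n) K)) t
    have htsnn : ∀ i, 0 ≤ ts i := fun i => add_nonneg ht (Hpos _).le
    have hind := hW5 n ts htsmono htsnn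
    set sets : Fin n → Set ℝ :=
      fun i => Iic (2 * Real.sqrt (H (K + (n - ((i : ℕ) + 1))))) with hsets
    have hprod := hind.measure_inter_preimage_eq_mul (S := Finset.univ)
      (sets := sets) (fun i _ => measurableSet_Iic)
    -- index facts
    have hk : ∀ i : Fin n, K + (n - (i : ℕ)) = (K + (n - ((i : ℕ) + 1))) + 1 := by
      intro i
      have := i.isLt
      omega
    have htssucc : ∀ i : Fin n, ts i.succ = t + H (K + (n - ((i : ℕ) + 1))) := by
      intro i
      simp [hts, Fin.val_succ]
    have htscast : ∀ i : Fin n, ts i.castSucc = t + H ((K + (n - ((i : ℕ) + 1))) + 1) := by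
      intro i
      simp only [hts, Fin.coe_castSucc]
      rw [hk i]
    -- the tail event is contained in the finite intersection
    have hsub : {ω | ∀ k, K ≤ k → W (t + H k) ω - W (t + H (k + 1)) ω ≤ 2 * Real.sqrt (H k)}
        ⊆ ⋂ i ∈ (Finset.univ : Finset (Fin n)),
          (fun ω => W (ts i.succ) ω - W (ts i.castSucc) ω) ⁻¹' sets i := by
      intro ω hω
      simp only [Finset.mem_univ, Set.iInter_true, Set.mem_iInter, Set.mem_preimage, hsets,
        Set.mem_Iic]
      intro i
      rw [htssucc i, htscast i]
      exact hω _ (Nat.le_add_right _ _)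
    refine le_trans (measure_mono hsub) ?_
    rw [hprod]
    have hfac : ∀ i : Fin n,
        P ((fun ω => W (ts i.succ) ω - W (ts i.castSucc) ω) ⁻¹' sets i) ≤ stdGaussIic3 := by
      intro i
      set m := K + (n - ((i : ℕ) + 1)) with hm
      have hle : ts i.castSucc ≤ ts i.succ := htsmono (Fin.castSucc_lt_succ (i := i)).le
      have hmeas : Measurable (fun ω => W (ts i.succ) ω - W (ts i.castSucc) ω) :=
        (hW1 _).sub (hW1 _)
      have hmap := hW4 (ts i.castSucc) (ts i.succ) (htsnn _) hle
      have happ : P ((fun ω => W (ts i.succ) ω - W (ts i.castSucc) ω) ⁻¹' sets i)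
          = gaussianReal 0 (Real.toNNReal (ts i.succ - ts i.castSucc)) (sets i) := by
        rw [← hmap, Measure.map_apply hmeas measurableSet_Iic]
      rw [happ]
      have hv : ts i.succ - ts i.castSucc = H m - H (m + 1) := by
        rw [htssucc i, htscast i]
        ring
      have hvpos : 0 < H m - H (m + 1) := by
        have := Hhalf m
        have := Hpos m
        linarith
      have hr : 2 * Real.sqrt (H m) ≤ 3 * Real.sqrt (H m - H (m + 1)) := by
        have h1 : H m / 2 ≤ H m - H (m + 1) := by have := Hhalf m; linarith
        have h2 := Real.sq_sqrt hvpos.le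
        have h3 := Real.sq_sqrt (Hpos m).le
        have h4 := Real.sqrt_nonneg (H m - H (m + 1))
        have h5 := Real.sqrt_nonneg (H m)
        nlinarith
      have := gauss_Iic_le hvpos hr
      rw [hv]
      exact this
    calc ∏ i : Fin n, P ((fun ω => W (ts i.succ) ω - W (ts i.castSucc) ω) ⁻¹' sets i)
        ≤ stdGaussIic3 ^ (Finset.univ : Finset (Fin n)).card :=
          Finset.prod_le_pow_card _ _ _ (fun i _ => hfac i)
      _ = stdGaussIic3 ^ n := by simp
  have htend := ENNReal.tendsto_pow_atTop_nhds_zero_of_lt_one stdGaussIic3_lt_one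
  exact le_antisymm (ge_of_tendsto' htend key) zero_le

/-- Non-confinement in the Hölder ball starting at the boundary: if the initial path `γ`
attains its `α`-Hölder modulus `μ` between some `t₁ < t` and the endpoint `t`, i.e.
`γ(t) − γ(t₁) = μ(t−t₁)^α`, then the Brownian continuation `W^γ` of `γ` after time `t`
a.s. admits no `δ > 0` with `⟦W^γ_{t+δ}⟧_α ≤ μ`: it exits `C^α_μ` immediately. -/
theorem brownian_exits_holder_ball {Ω : Type*} [MeasurableSpace Ω]
    (P : Measure Ω) [IsProbabilityMeasure P] (W : ℝ → Ω → ℝ)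
    (hW : IsStandardBrownianMotion P W)
    (T t t₁ α μ : ℝ) (hα : 0 < α) (hα1 : α < 1) (hμ : 0 < μ)
    (ht : t ∈ Ico (0 : ℝ) T) (ht₁ : t₁ ∈ Ico (0 : ℝ) t)
    (γ : ℝ → ℝ) (hγ0 : γ 0 = 0) (hγcont : ContinuousOn γ (Icc 0 t))
    (hγhold : ∀ s ∈ Icc (0 : ℝ) t, ∀ r ∈ Icc (0 : ℝ) t, |γ s - γ r| ≤ μ * |s - r| ^ α)
    (hboundary : γ t - γ t₁ = μ * (t - t₁) ^ α)
    (Wγ : Ω → ℝ → ℝ)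
    (hWγ : ∀ ω s, Wγ ω s = if s < t then γ s else W s ω - W t ω + γ t) :
    P {ω | ∃ δ : ℝ, 0 < δ ∧ t + δ ≤ T ∧
        ∀ s₁ ∈ Icc (0 : ℝ) (t + δ), ∀ s₂ ∈ Icc (0 : ℝ) (t + δ),
          |Wγ ω s₁ - Wγ ω s₂| ≤ μ * |s₁ - s₂| ^ α} = 0 := by
  obtain ⟨hW1, hW2, hW3, hW4, hW5⟩ := hW
  have hd : 0 < t - t₁ := sub_pos.mpr ht₁.2
  have hcc : 0 < μ * (α * (t - t₁) ^ (α - 1)) :=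
    mul_pos hμ (mul_pos hα (Real.rpow_pos_of_pos hd _))
  obtain ⟨H, Hpos, Hhalf, Hanti, Hc, Hμs, Hpow⟩ := exists_holder_seq hcc hμ hα
  set B : ℕ → Set Ω := fun K =>
    {ω | ∀ k, K ≤ k → W (t + H k) ω - W (t + H (k + 1)) ω ≤ 2 * Real.sqrt (H k)} with hB
  have hBzero : ∀ K, P (B K) = 0 := fun K =>
    prob_tail_incr_zero P W hW1 hW4 hW5 t ht.1 H Hpos Hhalf Hanti K
  have hsub : {ω | ∃ δ : ℝ, 0 < δ ∧ t + δ ≤ T ∧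
        ∀ s₁ ∈ Icc (0 : ℝ) (t + δ), ∀ s₂ ∈ Icc (0 : ℝ) (t + δ),
          |Wγ ω s₁ - Wγ ω s₂| ≤ μ * |s₁ - s₂| ^ α} ⊆ ⋃ K, B K := by
    rintro ω ⟨δ, hδ, hδT, hHol⟩
    obtain ⟨K, hK⟩ := exists_pow_lt_of_lt_one hδ (by norm_num : (1/2 : ℝ) < 1)
    refine Set.mem_iUnion.mpr ⟨K, ?_⟩
    intro k hk
    have hkδ : H k ≤ δ := le_trans (Hanti K k hk) (le_trans (Hpow K) hK.le)
    have hk1δ : H (k + 1) ≤ δ := le_trans (Hanti k (k + 1) (Nat.le_succ k)) hkδ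
    have hpk := Hpos k
    have hpk1 := Hpos (k + 1)
    have hs1 : t + H k ∈ Icc (0 : ℝ) (t + δ) := ⟨by linarith [ht.1], by linarith⟩
    have hs1' : t + H (k + 1) ∈ Icc (0 : ℝ) (t + δ) := ⟨by linarith [ht.1], by linarith⟩
    have ht₁mem : t₁ ∈ Icc (0 : ℝ) (t + δ) := ⟨ht₁.1, by linarith [ht₁.2.le]⟩
    have htmem : t ∈ Icc (0 : ℝ) (t + δ) := ⟨ht.1, by linarith⟩
    have e1 : Wγ ω (t + H k) = W (t + H k) ω - W t ω + γ t := by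
      rw [hWγ, if_neg (by linarith : ¬ t + H k < t)]
    have e1' : Wγ ω (t + H (k + 1)) = W (t + H (k + 1)) ω - W t ω + γ t := by
      rw [hWγ, if_neg (by linarith : ¬ t + H (k + 1) < t)]
    have e2 : Wγ ω t₁ = γ t₁ := by rw [hWγ, if_pos ht₁.2]
    have e3 : Wγ ω t = γ t := by
      rw [hWγ, if_neg (lt_irrefl t)]
      ring
    -- upper bound at time t + H k, against the boundary point t₁
    have hu := hHol (t + H k) hs1 t₁ ht₁mem
    rw [e1, e2] at hu
    have habs : |t + H k - t₁| = (t - t₁) + H k := by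
      rw [abs_of_nonneg (by linarith)]
      ring
    rw [habs] at hu
    have hrp : ((t - t₁) + H k) ^ α ≤ (t - t₁) ^ α + α * (t - t₁) ^ (α - 1) * H k :=
      concave_rpow_bound hα.le hα1.le hd hpk.le
    have hu2 := (abs_le.mp hu).2
    have hu3 : μ * ((t - t₁) + H k) ^ α
        ≤ μ * (t - t₁) ^ α + μ * (α * (t - t₁) ^ (α - 1)) * H k := by
      have := mul_le_mul_of_nonneg_left hrp hμ.le
      nlinarith
    have hub : W (t + H k) ω - W t ω ≤ Real.sqrt (H k) := by
      have := Hc k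
      linarith [hboundary]
    -- lower bound at time t + H (k+1), against the point t
    have hl := hHol (t + H (k + 1)) hs1' t htmem
    rw [e1', e3] at hl
    have h8 : W (t + H (k + 1)) ω - W t ω + γ t - γ t = W (t + H (k + 1)) ω - W t ω := by
      ring
    rw [h8, show t + H (k + 1) - t = H (k + 1) by ring,
      abs_of_nonneg hpk1.le] at hl
    have hlb : -(Real.sqrt (H k)) ≤ W (t + H (k + 1)) ω - W t ω := by
      have := (abs_le.mp hl).1
      have := Hμs k
      linarith
    show W (t + H k) ω - W (t + H (k + 1)) ω ≤ 2 * Real.sqrt (H k)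
    linarith
  exact measure_mono_null hsub (measure_iUnion_null fun K => hBzero K)
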